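/- Let A be an N×N complex matrix, ε > 0, D_ε = A + (1/ε)I, and ρ a density matrix with Tr[D_ε ρ D_ε*] ≠ 0. Then the difference (D_ε ρ D_ε*)/Tr[D_ε ρ D_ε*] − ρ − ε(Aρ + ρA* − Tr[ρ(A+A*)]ρ) has operator norm O(ε²) as ε → 0, uniformly over all density matrices ρ. More precisely, there exist constants ε₀ > 0 and K > 0 such that for all 0 < ε ≤ ε₀ and all density matrices ρ, ‖(D_ε ρ D_ε*)/Tr[D_ε ρ D_ε*] − ρ − ε(Aρ + ρA* − Tr[ρ(A+A*)]ρ)‖ ≤ K ε². -/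

import Mathlib

open Matrix ComplexOrder

attribute [local instance] Matrix.frobeniusNormedAddCommGroup
attribute [local instance] Matrix.frobeniusNormSMulClass

lemma rpow_half_sq (x : ℝ) (hx : 0 ≤ x) : (x ^ (2:ℝ)) ^ (1/2 : ℝ) = x := by
  rw [← Real.rpow_mul hx]; norm_num

lemma frob_entry_le {m n : Type*} [Fintype m] [Fintype n]
    (M : Matrix m n ℂ) (i : m) (j : n) : ‖M i j‖ ≤ ‖M‖ := by
  rw [Matrix.frobenius_norm_def]
  have h1 : ‖M i j‖ ^ (2:ℝ) ≤ ∑ i', ∑ j', ‖M i' j'‖ ^ (2:ℝ) := by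
    have h2 : ‖M i j‖ ^ (2:ℝ) ≤ ∑ j', ‖M i j'‖ ^ (2:ℝ) :=
      Finset.single_le_sum (f := fun j' => ‖M i j'‖ ^ (2:ℝ))
        (fun _ _ => Real.rpow_nonneg (norm_nonneg _) _) (Finset.mem_univ j)
    exact h2.trans <| Finset.single_le_sum (f := fun i' => ∑ j', ‖M i' j'‖ ^ (2:ℝ))
        (fun _ _ => Finset.sum_nonneg fun _ _ => Real.rpow_nonneg (norm_nonneg _) _)
        (Finset.mem_univ i)
  have h3 := Real.rpow_le_rpow (Real.rpow_nonneg (norm_nonneg (M i j)) _) h1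
    (by norm_num : (0:ℝ) ≤ 1/2)
  rwa [rpow_half_sq _ (norm_nonneg _)] at h3

lemma frob_norm_le_card {n : Type*} [Fintype n]
    (M : Matrix n n ℂ) (h : ∀ i j, ‖M i j‖ ≤ 1) : ‖M‖ ≤ (Fintype.card n : ℝ) := by
  rw [Matrix.frobenius_norm_def]
  have h1 : ∑ i, ∑ j, ‖M i j‖ ^ (2:ℝ) ≤ (Fintype.card n : ℝ) ^ (2:ℝ) := by
    have h2 : ∑ i, ∑ j, ‖M i j‖ ^ (2:ℝ) ≤ ∑ _i : n, ∑ _j : n, (1:ℝ) :=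
      Finset.sum_le_sum fun i _ => Finset.sum_le_sum fun j _ =>
        Real.rpow_le_one (norm_nonneg _) (h i j) (by norm_num)
    refine h2.trans ?_
    rw [Real.rpow_two]
    simp [sq]
  have h3 := Real.rpow_le_rpow
    (Finset.sum_nonneg fun _ _ => Finset.sum_nonneg fun _ _ => Real.rpow_nonneg (norm_nonneg _) _)
    h1 (by norm_num : (0:ℝ) ≤ 1/2)
  rwa [rpow_half_sq _ (Nat.cast_nonneg _)] at h3

lemma trace_norm_le' {n : Type*} [Fintype n] (M : Matrix n n ℂ) :
    ‖M.trace‖ ≤ (Fintype.card n : ℝ) * ‖M‖ := by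
  calc ‖M.trace‖ ≤ ∑ i, ‖M i i‖ := norm_sum_le _ _
    _ ≤ ∑ _i : n, ‖M‖ := Finset.sum_le_sum fun i _ => frob_entry_le M i i
    _ = _ := by simp [mul_comm]

lemma psd_diag {n : Type*} [Fintype n] [DecidableEq n]
    {ρ : Matrix n n ℂ} (h : ρ.PosSemidef) (i : n) : 0 ≤ ρ i i := by
  have h2 := h.dotProduct_mulVec_nonneg (Pi.single i 1)
  simpa [single_dotProduct, Matrix.mulVec_single_one, star_one,
    ← Pi.single_star] using h2

lemma quad_expand {n : Type*} [Fintype n] [DecidableEq n]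
    (ρ : Matrix n n ℂ) (i j : n) (u : ℂ) :
    (star (Pi.single i 1 + Pi.single j (-u))) ⬝ᵥ
        (ρ *ᵥ (Pi.single i 1 + Pi.single j (-u)))
        = ρ i i + ρ j j * ((starRingEnd ℂ) u * u)
          - (u * ρ i j + (starRingEnd ℂ) u * ρ j i) := by
  simp only [Matrix.mulVec_add, Matrix.mulVec_single, star_add, ← Pi.single_star,
    add_dotProduct, dotProduct_add, single_dotProduct,
    star_one, star_neg, starRingEnd_apply, Pi.add_apply, Pi.smul_apply, Matrix.col_apply,
    MulOpposite.smul_eq_mul_unop, MulOpposite.unop_op]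
  ring

lemma psd_entry_le_one {n : Type*} [Fintype n] [DecidableEq n]
    {ρ : Matrix n n ℂ} (h : ρ.PosSemidef) (htr : ρ.trace = 1) (i j : n) :
    ‖ρ i j‖ ≤ 1 := by
  have hd : ∀ k, 0 ≤ (ρ k k).re ∧ (ρ k k).im = 0 := by
    intro k
    have := psd_diag h k
    rw [Complex.le_def] at this
    simpa using ⟨this.1, this.2.symm⟩
  have hsum : ∑ k, (ρ k k).re = 1 := by
    have := congrArg Complex.re htr
    simpa [Matrix.trace, Matrix.diag, Complex.re_sum] using this
  have hdle : ∀ k, (ρ k k).re ≤ 1 := by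
    intro k
    rw [← hsum]
    exact Finset.single_le_sum (fun l _ => (hd l).1) (Finset.mem_univ k)
  by_cases hij : i = j
  · subst hij
    have hn : ‖ρ i i‖ = (ρ i i).re := by
      rw [Complex.norm_def, Complex.normSq_apply, (hd i).2]
      simp [Real.sqrt_mul_self (hd i).1]
    rw [hn]; exact hdle i
  · set c := ρ i j with hc
    by_cases hc0 : c = 0
    · simp [hc0]
    have hr : (0:ℝ) < ‖c‖ := norm_pos_iff.mpr hc0
    have habs : ((‖c‖ : ℝ) : ℂ) ≠ 0 := by
      exact_mod_cast hr.ne'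
    set u : ℂ := (starRingEnd ℂ) c / ‖c‖ with hu
    have huc : u * c = (‖c‖ : ℂ) := by
      rw [hu, div_mul_eq_mul_div, mul_comm, Complex.mul_conj, Complex.normSq_eq_norm_sq,
        sq]
      push_cast
      rw [mul_div_assoc, div_self habs, mul_one]
    have hnormu : ‖u‖ = 1 := by
      rw [hu, norm_div, RCLike.norm_conj, Complex.norm_real, Real.norm_of_nonneg hr.le,
        div_self hr.ne']
    have hnu : (starRingEnd ℂ) u * u = 1 := by
      rw [mul_comm, Complex.mul_conj, Complex.normSq_eq_norm_sq,
        hnormu]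
      norm_num
    have hji : ρ j i = (starRingEnd ℂ) c := by
      rw [hc, ← h.1.apply i j, starRingEnd_apply, star_star]
    have h2 := h.dotProduct_mulVec_nonneg (Pi.single i 1 + Pi.single j (-u))
    rw [quad_expand, hnu, hji, ← hc, ← _root_.map_mul, huc] at h2
    have hcc : (starRingEnd ℂ) ((‖c‖ : ℝ) : ℂ) = (‖c‖ : ℂ) := Complex.conj_ofReal _
    rw [hcc] at h2
    rw [Complex.le_def] at h2
    have hre : 0 ≤ (ρ i i).re + (ρ j j).re - 2 * ‖c‖ := by
      have := h2.1
      simp [Complex.add_re, Complex.sub_re, Complex.ofReal_re] at this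
      linarith
    have := hdle i
    have := hdle j
    linarith [(hd i).1, (hd j).1]

set_option maxHeartbeats 1600000 in
theorem stmt_1 (N : ℕ) (A : Matrix (Fin N) (Fin N) ℂ) :
    ∃ ε₀ > (0 : ℝ), ∃ K > (0 : ℝ),
      ∀ ε : ℝ, 0 < ε → ε ≤ ε₀ →
        ∀ ρ : Matrix (Fin N) (Fin N) ℂ, ρ.PosSemidef → ρ.trace = 1 →
          (((A + (ε : ℂ)⁻¹ • (1 : Matrix (Fin N) (Fin N) ℂ)) * ρ *
              (A + (ε : ℂ)⁻¹ • (1 : Matrix (Fin N) (Fin N) ℂ))ᴴ).trace ≠ 0) →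
          ‖(((A + (ε : ℂ)⁻¹ • (1 : Matrix (Fin N) (Fin N) ℂ)) * ρ *
                (A + (ε : ℂ)⁻¹ • (1 : Matrix (Fin N) (Fin N) ℂ))ᴴ).trace)⁻¹ •
              ((A + (ε : ℂ)⁻¹ • (1 : Matrix (Fin N) (Fin N) ℂ)) * ρ *
                (A + (ε : ℂ)⁻¹ • (1 : Matrix (Fin N) (Fin N) ℂ))ᴴ)
            - ρ - (ε : ℂ) • (A * ρ + ρ * Aᴴ - (ρ * (A + Aᴴ)).trace • ρ)‖ ≤ K * ε ^ 2 := by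
  classical
  set n : ℝ := (N : ℝ) with hn_def
  set a : ℝ := ‖A‖ with ha_def
  have ha : 0 ≤ a := norm_nonneg A
  have hn : 0 ≤ n := Nat.cast_nonneg N
  set bB : ℝ := 2*a*n + 1 with hbB_def
  set bC : ℝ := a*a*n + 1 with hbC_def
  set bs : ℝ := n * bB with hbs_def
  set bc : ℝ := n * bC with hbc_def
  set K0 : ℝ := bC + bc*n + bs*bB + bs*bs*n + bc*bB + bc*bs*n with hK0_def
  set L : ℝ := bs + bc + 1 with hL_def
  have hbB : 0 < bB := by positivity
  have hbC : 0 < bC := by positivity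
  have hbs : 0 ≤ bs := by positivity
  have hbc : 0 ≤ bc := by positivity
  have hK0 : 0 < K0 := by positivity
  have hL : 0 < L := by positivity
  refine ⟨min 1 (2*L)⁻¹, by positivity, 2*K0 + 1, by positivity, ?_⟩
  intro ε hε hεle ρ hρ htr _hne
  have hε1 : ε ≤ 1 := le_trans hεle (min_le_left _ _)
  have hεL : ε ≤ (2*L)⁻¹ := le_trans hεle (min_le_right _ _)
  set e : ℂ := (ε:ℂ) with he
  have he0 : e ≠ 0 := by
    rw [he]; exact_mod_cast hε.ne'
  have hnorme : ‖e‖ = ε := by rw [he, Complex.norm_real, Real.norm_of_nonneg hε.le]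
  -- entrywise bound on ρ
  have hρn : ‖ρ‖ ≤ n := by
    have := frob_norm_le_card ρ (fun i j => psd_entry_le_one hρ htr i j)
    simpa [hn_def] using this
  -- key expansion of the product
  set D : Matrix (Fin N) (Fin N) ℂ := A + e⁻¹ • 1 with hD_def
  have hstar : star e⁻¹ = e⁻¹ := by
    rw [he, ← Complex.ofReal_inv]; exact Complex.conj_ofReal _
  have hDρ : D * ρ * Dᴴ
      = (e⁻¹*e⁻¹) • (ρ + e • (A * ρ + ρ * Aᴴ) + (e*e) • (A * ρ * Aᴴ)) := by
    rw [hD_def]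
    rw [conjTranspose_add, conjTranspose_smul, conjTranspose_one, hstar]
    simp only [add_mul, mul_add, Matrix.smul_mul, Matrix.mul_smul, Matrix.mul_one,
      Matrix.one_mul, smul_add, smul_smul]
    match_scalars <;> field_simp <;> ring
  set B : Matrix (Fin N) (Fin N) ℂ := A * ρ + ρ * Aᴴ with hB_def
  set C : Matrix (Fin N) (Fin N) ℂ := A * ρ * Aᴴ with hC_def
  set s : ℂ := (ρ * (A + Aᴴ)).trace with hs_def
  set c : ℂ := C.trace with hc_def
  -- norm bounds
  have hBn : ‖B‖ ≤ bB := by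
    calc ‖B‖ ≤ ‖A * ρ‖ + ‖ρ * Aᴴ‖ := norm_add_le _ _
      _ ≤ ‖A‖*‖ρ‖ + ‖ρ‖*‖Aᴴ‖ :=
        add_le_add (Matrix.frobenius_norm_mul _ _) (Matrix.frobenius_norm_mul _ _)
      _ ≤ a*n + n*a := by
        rw [Matrix.frobenius_norm_conjTranspose]
        exact add_le_add (mul_le_mul_of_nonneg_left hρn ha)
          (mul_le_mul_of_nonneg_right hρn ha)
      _ ≤ bB := by rw [hbB_def]; nlinarith
  have hCn : ‖C‖ ≤ bC := by
    calc ‖C‖ ≤ ‖A * ρ‖ * ‖Aᴴ‖ := Matrix.frobenius_norm_mul _ _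
      _ ≤ (‖A‖*‖ρ‖) * ‖Aᴴ‖ :=
        mul_le_mul_of_nonneg_right (Matrix.frobenius_norm_mul _ _) (norm_nonneg _)
      _ ≤ bC := by
        rw [Matrix.frobenius_norm_conjTranspose, hbC_def]
        nlinarith [mul_le_mul_of_nonneg_left hρn ha, norm_nonneg ρ]
  have hsB : B.trace = s := by
    rw [hB_def, hs_def, mul_add, trace_add, trace_add, trace_mul_comm ρ A]
  have hsn : ‖s‖ ≤ bs := by
    rw [← hsB, hbs_def]
    calc ‖B.trace‖ ≤ (Fintype.card (Fin N) : ℝ) * ‖B‖ := trace_norm_le' B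
      _ ≤ n * bB := by
        rw [Fintype.card_fin, ← hn_def]
        exact mul_le_mul_of_nonneg_left hBn hn
  have hcn : ‖c‖ ≤ bc := by
    rw [hc_def, hbc_def]
    calc ‖C.trace‖ ≤ (Fintype.card (Fin N) : ℝ) * ‖C‖ := trace_norm_le' C
      _ ≤ n * bC := by
        rw [Fintype.card_fin, ← hn_def]
        exact mul_le_mul_of_nonneg_left hCn hn
  -- the scalar τ
  set τ : ℂ := 1 + e*s + (e*e)*c with hτ_def
  have hτ1 : ‖τ - 1‖ ≤ 1/2 := by
    have h1 : ‖τ - 1‖ ≤ ε*bs + (ε*ε)*bc := by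
      rw [hτ_def]
      calc ‖1 + e*s + (e*e)*c - 1‖ = ‖e*s + (e*e)*c‖ := by ring_nf
        _ ≤ ‖e*s‖ + ‖(e*e)*c‖ := norm_add_le _ _
        _ = ε*‖s‖ + (ε*ε)*‖c‖ := by rw [norm_mul, norm_mul, norm_mul, hnorme]
        _ ≤ ε*bs + (ε*ε)*bc := by
          exact add_le_add (mul_le_mul_of_nonneg_left hsn hε.le)
            (mul_le_mul_of_nonneg_left hcn (by positivity))
    have h2 : ε*bs + (ε*ε)*bc ≤ ε*L := by
      rw [hL_def]
      nlinarith [mul_nonneg (sub_nonneg.mpr hε1) (mul_nonneg hε.le hbc), hε.le]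
    have h3 : ε*L ≤ 1/2 := by
      have h4 : ε*L ≤ (2*L)⁻¹*L := mul_le_mul_of_nonneg_right hεL hL.le
      have h5 : (2*L)⁻¹*L = 1/2 := by field_simp
      linarith
    exact h1.trans (h2.trans h3)
  have hτn : 1/2 ≤ ‖τ‖ := by
    have := norm_sub_norm_le (1:ℂ) (1 - τ)
    simp only [sub_sub_cancel, norm_one] at this
    have h4 : ‖(1:ℂ) - τ‖ = ‖τ - 1‖ := norm_sub_rev _ _
    linarith [h4 ▸ this]
  have hτ0 : τ ≠ 0 := by
    intro h0
    rw [h0, norm_zero] at hτn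
    linarith
  have hτinv : ‖τ⁻¹‖ ≤ 2 := by
    rw [norm_inv]
    rw [inv_le_comm₀ (by positivity) (by norm_num)]
    linarith
  -- trace computation
  have ht : (D * ρ * Dᴴ).trace = (e⁻¹*e⁻¹) * τ := by
    rw [hDρ, trace_smul, trace_add, trace_add, trace_smul, trace_smul, htr, hsB,
      ← hc_def, hτ_def]
    simp only [smul_eq_mul]
  -- the remainder matrix
  set R : Matrix (Fin N) (Fin N) ℂ :=
    C - c•ρ - s•B + (s*s)•ρ - (e*c)•B + ((e*c)*s)•ρ with hR_def
  -- decomposition identity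
  have hXd : ρ + e • B + (e*e) • C = τ • (ρ + e • (B - s•ρ)) + (e*e) • R := by
    rw [hτ_def, hR_def]
    match_scalars <;> ring
  have hco : ((e⁻¹*e⁻¹) * τ)⁻¹ * (e⁻¹*e⁻¹) = τ⁻¹ := by
    field_simp
  have key : (D * ρ * Dᴴ).trace⁻¹ • (D * ρ * Dᴴ) - ρ - e • (B - s•ρ)
      = (τ⁻¹ * (e*e)) • R := by
    rw [ht, hDρ, smul_smul, hco, hXd, smul_add, smul_smul,
      inv_mul_cancel₀ hτ0, one_smul, smul_smul]
    abel
  rw [key, norm_smul, norm_mul, norm_mul, hnorme]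
  -- bound ‖R‖
  have hRn : ‖R‖ ≤ K0 := by
    have hb1 : ‖c•ρ‖ ≤ bc * n := by
      rw [norm_smul]
      exact mul_le_mul hcn hρn (norm_nonneg _) hbc
    have hb2 : ‖s•B‖ ≤ bs * bB := by
      rw [norm_smul]
      exact mul_le_mul hsn hBn (norm_nonneg _) hbs
    have hb3 : ‖(s*s)•ρ‖ ≤ bs * bs * n := by
      rw [norm_smul, norm_mul]
      exact mul_le_mul (mul_le_mul hsn hsn (norm_nonneg _) hbs) hρn (norm_nonneg _)
        (by positivity)
    have hb4 : ‖(e*c)•B‖ ≤ bc * bB := by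
      rw [norm_smul, norm_mul, hnorme]
      have h5 : ε * ‖c‖ ≤ bc := by nlinarith [norm_nonneg c]
      exact mul_le_mul h5 hBn (norm_nonneg _) hbc
    have hb5 : ‖((e*c)*s)•ρ‖ ≤ bc * bs * n := by
      rw [norm_smul, norm_mul, norm_mul, hnorme]
      have h5 : ε * ‖c‖ ≤ bc := by nlinarith [norm_nonneg c]
      exact mul_le_mul (mul_le_mul h5 hsn (norm_nonneg _) hbc) hρn (norm_nonneg _)
        (by positivity)
    rw [hR_def, hK0_def]
    calc ‖C - c•ρ - s•B + (s*s)•ρ - (e*c)•B + ((e*c)*s)•ρ‖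
        ≤ ‖C - c•ρ - s•B + (s*s)•ρ - (e*c)•B‖ + ‖((e*c)*s)•ρ‖ := norm_add_le _ _
      _ ≤ ‖C - c•ρ - s•B + (s*s)•ρ‖ + ‖(e*c)•B‖ + ‖((e*c)*s)•ρ‖ := by
          have := norm_sub_le (C - c•ρ - s•B + (s*s)•ρ) ((e*c)•B)
          linarith
      _ ≤ ‖C - c•ρ - s•B‖ + ‖(s*s)•ρ‖ + ‖(e*c)•B‖ + ‖((e*c)*s)•ρ‖ := by
          have := norm_add_le (C - c•ρ - s•B) ((s*s)•ρ)
          linarith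
      _ ≤ ‖C - c•ρ‖ + ‖s•B‖ + ‖(s*s)•ρ‖ + ‖(e*c)•B‖ + ‖((e*c)*s)•ρ‖ := by
          have := norm_sub_le (C - c•ρ) (s•B)
          linarith
      _ ≤ ‖C‖ + ‖c•ρ‖ + ‖s•B‖ + ‖(s*s)•ρ‖ + ‖(e*c)•B‖ + ‖((e*c)*s)•ρ‖ := by
          have := norm_sub_le C (c•ρ)
          linarith
      _ ≤ bC + bc*n + bs*bB + bs*bs*n + bc*bB + bc*bs*n := by
          linarith [hCn]
  calc ‖τ⁻¹‖ * (ε * ε) * ‖R‖ ≤ 2 * (ε * ε) * K0 := by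
        have h6 : ‖τ⁻¹‖ * (ε*ε) ≤ 2 * (ε*ε) :=
          mul_le_mul_of_nonneg_right hτinv (by positivity)
        exact mul_le_mul h6 hRn (norm_nonneg _) (by positivity)
    _ ≤ (2*K0 + 1) * ε^2 := by nlinarith
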